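/- Fix real numbers 0 < q_u < 1. Let sequences (A_k), (γ_k), (a_k), (L'_k) of positive reals satisfy γ_k > A_k μ with μ > 0, L'_{k+1} a_{k+1}² = A_{k+1} γ_{k+1}, A_{k+1} = A_k + a_{k+1}, and μ/L'_{k+1} ≥ q_u for all k. Then A_{k+1}/A_k > 1/(1 − sqrt(q_u)) for all k ≥ 1, and consequently A_k ≥ A₁ (1 − sqrt(q_u))^{−(k−1)} for all k ≥ 1. -/
import Mathlib


theorem acgm_weight_lower_bound_strongly_convex
    (μ qu : ℝ) (hμ : 0 < μ) (hqu0 : 0 < qu) (hqu1 : qu < 1)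
    (A a γ L' : ℕ → ℝ)
    (hApos : ∀ k, 0 < A k) (hapos : ∀ k, 0 < a k)
    (hγpos : ∀ k, 0 < γ k) (hLpos : ∀ k, 0 < L' k)
    (hγA : ∀ k, γ k > A k * μ)
    (hstep : ∀ k, L' (k + 1) * a (k + 1) ^ 2 = A (k + 1) * γ (k + 1))
    (hAacc : ∀ k, A (k + 1) = A k + a (k + 1))
    (hq : ∀ k, μ / L' (k + 1) ≥ qu) :
    (∀ k : ℕ, 1 ≤ k → A (k + 1) / A k > 1 / (1 - Real.sqrt qu)) ∧
    (∀ k : ℕ, 1 ≤ k → A k ≥ A 1 / (1 - Real.sqrt qu) ^ (k - 1)) := by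
  set s := Real.sqrt qu with hs
  have hs0 : 0 < s := Real.sqrt_pos.mpr hqu0
  have hs1 : s < 1 := by
    rw [hs, show (1:ℝ) = Real.sqrt 1 by simp]
    exact Real.sqrt_lt_sqrt hqu0.le hqu1
  have h1s : 0 < 1 - s := by linarith
  -- key: A (k+1) * (1 - s) > A k
  have key : ∀ k, A (k + 1) * (1 - s) > A k := by
    intro k
    have hL := hLpos (k + 1)
    have hqk : qu * L' (k + 1) ≤ μ := by
      have := hq k
      rw [ge_iff_le, le_div_iff₀ hL] at this
      exact this
    have ha2 : a (k + 1) ^ 2 = A (k + 1) * γ (k + 1) / L' (k + 1) := by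
      field_simp
      linarith [hstep k]
    have hA1 : 0 < A (k + 1) := hApos (k + 1)
    have hgt : a (k + 1) ^ 2 > qu * A (k + 1) ^ 2 := by
      rw [ha2, gt_iff_lt, lt_div_iff₀ hL]
      have := hγA (k + 1)
      nlinarith [hApos (k+1)]
    have hsq : s * A (k + 1) < a (k + 1) := by
      have h1 : (s * A (k + 1)) ^ 2 < a (k + 1) ^ 2 := by
        have : s ^ 2 = qu := Real.sq_sqrt hqu0.le
        nlinarith
      have h2 : 0 ≤ s * A (k + 1) := by positivity
      nlinarith [hapos (k + 1)]
    have := hAacc k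
    nlinarith
  have hrat : ∀ k : ℕ, 1 ≤ k → A (k + 1) / A k > 1 / (1 - s) := by
    intro k _
    rw [gt_iff_lt, div_lt_div_iff₀ h1s (hApos k)]
    have := key k
    nlinarith
  refine ⟨hrat, ?_⟩
  intro k hk
  induction k with
  | zero => omega
  | succ n ih =>
    rcases Nat.eq_or_lt_of_le hk with h | h
    · have hn0 : n = 0 := by omega
      subst hn0; simp
    · have hn : 1 ≤ n := by omega
      have ihn := ih hn
      have hkey := key n
      have hpow : (0:ℝ) < (1 - s) ^ (n - 1) := by positivity
      have hstepA : A (n + 1) > A n / (1 - s) := by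
        rw [gt_iff_lt, div_lt_iff₀ h1s]; linarith
      have : A 1 / (1 - s) ^ (n + 1 - 1) = (A 1 / (1 - s) ^ (n - 1)) / (1 - s) := by
        rw [div_div, ← pow_succ]
        congr 2
        omega
      rw [this]
      have h2 : (A 1 / (1 - s) ^ (n - 1)) / (1 - s) ≤ A n / (1 - s) := by
        gcongr
      linarith
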